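/- (Recursion in covariance matrix mismatch.) Let Σ and Σ̂ be real symmetric positive semidefinite n×n matrices, let û be a unit eigenvector of Σ̂ with eigenvalue λ̂ ≥ 0, let β ≥ 0, σ > 0, and a = √β·û. Define the one-step updates Σ̂′ = Σ̂ − Σ̂ a aᵀ Σ̂/(βλ̂ + σ²) and Σ′ = Σ − Σ a aᵀ Σ/(aᵀΣa + σ²), and set δ = ‖Σ̂ − Σ‖ and δ′ = ‖Σ̂′ − Σ′‖. If β·δ ≤ 3σ²/4, then δ′ ≤ 4δ. -/

import Mathlib

open MeasureTheory ProbabilityTheory Matrix BigOperators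
open scoped Matrix.Norms.L2Operator

set_option maxHeartbeats 1000000

/-- Spectral (ℓ²-operator) norm of a real square matrix. -/
noncomputable def specNorm {n : ℕ} (A : Matrix (Fin n) (Fin n) ℝ) : ℝ :=
  ‖LinearMap.toContinuousLinearMap (Matrix.toEuclideanLin A)‖

noncomputable def eu {n : ℕ} (v : Fin n → ℝ) : EuclideanSpace ℝ (Fin n) :=
  (WithLp.equiv 2 _).symm v

variable {n : ℕ}

lemma specNorm_eq_norm (A : Matrix (Fin n) (Fin n) ℝ) : specNorm A = ‖A‖ := rfl

lemma eu_dot_CS (v w : Fin n → ℝ) : |v ⬝ᵥ w| ≤ ‖eu v‖ * ‖eu w‖ := by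
  have h := abs_real_inner_le_norm (eu v) (eu w)
  unfold eu at h
  change |inner ℝ (WithLp.toLp 2 v) (WithLp.toLp 2 w)| ≤ _ at h
  rwa [EuclideanSpace.inner_toLp_toLp, star_trivial, dotProduct_comm] at h

lemma eu_norm_mul_self (v : Fin n → ℝ) : ‖eu v‖ * ‖eu v‖ = v ⬝ᵥ v := by
  rw [← real_inner_self_eq_norm_mul_norm]
  unfold eu
  change inner ℝ (WithLp.toLp 2 v) (WithLp.toLp 2 v) = _
  rw [EuclideanSpace.inner_toLp_toLp, star_trivial]

lemma eu_mulVec_le (A : Matrix (Fin n) (Fin n) ℝ) (x : Fin n → ℝ) :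
    ‖eu (A *ᵥ x)‖ ≤ ‖A‖ * ‖eu x‖ :=
  A.l2_opNorm_mulVec (eu x)

lemma vecMulVec_mulVec' (v w x : Fin n → ℝ) : vecMulVec v w *ᵥ x = (w ⬝ᵥ x) • v := by
  ext i
  simp only [mulVec, vecMulVec_apply, dotProduct, Pi.smul_apply, smul_eq_mul, Finset.sum_mul]
  exact Finset.sum_congr rfl fun j _ => by ring

lemma norm_vecMulVec_le (v w : Fin n → ℝ) : ‖vecMulVec v w‖ ≤ ‖eu v‖ * ‖eu w‖ := by
  rw [l2_opNorm_def]
  refine ContinuousLinearMap.opNorm_le_bound _ (by positivity) fun x => ?_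
  have hx : (LinearMap.toContinuousLinearMap (toEuclideanLin (vecMulVec v w))) x
      = eu ((w ⬝ᵥ (WithLp.equiv 2 _ x)) • v) := by
    rw [LinearMap.coe_toContinuousLinearMap', toEuclideanLin_apply, vecMulVec_mulVec']
    rfl
  rw [LinearEquiv.trans_apply, hx]
  have : eu ((w ⬝ᵥ (WithLp.equiv 2 _ x)) • v) = (w ⬝ᵥ (WithLp.equiv 2 _ x)) • eu v := rfl
  rw [this, norm_smul, Real.norm_eq_abs]
  have hcs := eu_dot_CS w (WithLp.equiv 2 _ x)
  have hex : eu (WithLp.equiv 2 _ x) = x := (WithLp.equiv 2 _).symm_apply_apply x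
  rw [hex] at hcs
  calc |w ⬝ᵥ (WithLp.equiv 2 _ x)| * ‖eu v‖ ≤ (‖eu w‖ * ‖x‖) * ‖eu v‖ := by
        exact mul_le_mul_of_nonneg_right hcs (norm_nonneg _)
    _ = ‖eu v‖ * ‖eu w‖ * ‖x‖ := by ring

/-- Recursion in covariance matrix mismatch. If `β·δ ≤ 3σ²/4`,
then after one Info-Greedy update (assumed covariance updated with the assumed eigenvalue,
true covariance updated with the exact posterior formula) the mismatch grows at most by a
factor of 4. -/
theorem stmt6 {n : ℕ} (S Shat : Matrix (Fin n) (Fin n) ℝ)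
    (hS : S.PosSemidef) (hShat : Shat.PosSemidef)
    (uhat : Fin n → ℝ) (hu : uhat ⬝ᵥ uhat = 1)
    (lamhat : ℝ) (hlam : 0 ≤ lamhat) (heig : Shat.mulVec uhat = lamhat • uhat)
    (β σ : ℝ) (hβ : 0 ≤ β) (hσ : 0 < σ)
    (a : Fin n → ℝ) (ha : a = Real.sqrt β • uhat)
    (Shat' : Matrix (Fin n) (Fin n) ℝ)
    (hShat' : Shat' = Shat - (β * lamhat + σ ^ 2)⁻¹ •
      Matrix.vecMulVec (Shat.mulVec a) (Shat.vecMul a))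
    (S' : Matrix (Fin n) (Fin n) ℝ)
    (hS' : S' = S - (a ⬝ᵥ S.mulVec a + σ ^ 2)⁻¹ •
      Matrix.vecMulVec (S.mulVec a) (S.vecMul a))
    (δ δ' : ℝ) (hδ : δ = specNorm (Shat - S)) (hδ' : δ' = specNorm (Shat' - S'))
    (hsmall : β * δ ≤ 3 * σ ^ 2 / 4) :
    δ' ≤ 4 * δ := by
  set sb := Real.sqrt β with hsb
  have hb2 : sb * sb = β := Real.mul_self_sqrt hβ
  set v : Fin n → ℝ := (Shat - S) *ᵥ uhat with hv
  set w : Fin n → ℝ := S *ᵥ uhat with hwdef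
  have hw : w = lamhat • uhat - v := by
    rw [hv, Matrix.sub_mulVec, heig, ← hwdef]; abel
  set e : ℝ := uhat ⬝ᵥ v with he_def
  set q : ℝ := uhat ⬝ᵥ w with hq_def
  have hq : q = lamhat - e := by
    rw [hq_def, hw, dotProduct_sub, dotProduct_smul, hu, smul_eq_mul, mul_one, he_def]
  -- symmetry
  have hShT : Shatᵀ = Shat := by
    have h := hShat.1
    rwa [Matrix.IsHermitian, Matrix.conjTranspose_eq_transpose_of_trivial] at h
  have hST : Sᵀ = S := by
    have h := hS.1
    rwa [Matrix.IsHermitian, Matrix.conjTranspose_eq_transpose_of_trivial] at h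
  have hSa : Shat *ᵥ a = sb • lamhat • uhat := by rw [ha, Matrix.mulVec_smul, heig]
  have hSva : Shat.vecMul a = sb • lamhat • uhat := by
    show Matrix.vecMul a Shat = _
    rw [← hShT, Matrix.vecMul_transpose]; exact hSa
  have hWa : S *ᵥ a = sb • w := by rw [ha, Matrix.mulVec_smul, hwdef]
  have hWva : S.vecMul a = sb • w := by
    show Matrix.vecMul a S = _
    rw [← hST, Matrix.vecMul_transpose]; exact hWa
  have had : a ⬝ᵥ S *ᵥ a = β * q := by
    rw [ha, Matrix.mulVec_smul, smul_dotProduct, dotProduct_smul, smul_eq_mul, smul_eq_mul,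
      ← mul_assoc, hb2, ← hwdef, hq_def]
  -- the key algebraic decomposition
  have key : Shat' - S' = (Shat - S)
      + (β * lamhat * lamhat * ((β * q + σ ^ 2)⁻¹ - (β * lamhat + σ ^ 2)⁻¹)) •
          Matrix.vecMulVec uhat uhat
      - (β * lamhat * (β * q + σ ^ 2)⁻¹) •
          (Matrix.vecMulVec uhat v + Matrix.vecMulVec v uhat)
      + (β * (β * q + σ ^ 2)⁻¹) • Matrix.vecMulVec v v := by
    have hwv : ∀ i, w i = lamhat * uhat i - v i := fun i => by
      rw [hw]; simp
    rw [hShat', hS', had, hSa, hSva, hWa, hWva]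
    ext i j
    simp only [Matrix.sub_apply, Matrix.add_apply, Matrix.smul_apply, Matrix.vecMulVec_apply,
      Pi.smul_apply, smul_eq_mul]
    rw [hwv i, hwv j, ← hb2]
    ring
  -- norms
  have hδn : δ = ‖Shat - S‖ := by rw [hδ, specNorm_eq_norm]
  have hδ'n : δ' = ‖Shat' - S'‖ := by rw [hδ', specNorm_eq_norm]
  have hδ0 : 0 ≤ δ := by rw [hδn]; exact norm_nonneg _
  have hu1 : ‖eu uhat‖ = 1 := by
    have h := eu_norm_mul_self uhat
    rw [hu] at h
    rcases mul_self_eq_one_iff.mp h with h1 | h1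
    · exact h1
    · nlinarith [norm_nonneg (eu uhat)]
  have hrδ : ‖eu v‖ ≤ δ := by
    have h := eu_mulVec_le (Shat - S) uhat
    rw [hu1, mul_one] at h
    rw [hδn]; exact h
  have hr0 : (0:ℝ) ≤ ‖eu v‖ := norm_nonneg _
  have heδ : |e| ≤ δ := by
    have h := eu_dot_CS uhat v
    rw [hu1, one_mul] at h
    exact le_trans h hrδ
  have hq0 : 0 ≤ q := by
    have h := hS.dotProduct_mulVec_nonneg uhat
    rwa [star_trivial, ← hwdef, ← hq_def] at h
  have hσ2 : (0:ℝ) < σ ^ 2 := by positivity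
  have hD : (0:ℝ) < β * q + σ ^ 2 := by nlinarith [mul_nonneg hβ hq0]
  have hC : (0:ℝ) < β * lamhat + σ ^ 2 := by nlinarith [mul_nonneg hβ hlam]
  have hβe : β * e ≤ 3 * σ ^ 2 / 4 := by
    have h0 : e ≤ δ := le_trans (le_abs_self e) heδ
    have h1 : β * e ≤ β * δ := mul_le_mul_of_nonneg_left h0 hβ
    linarith
  have hDlb : β * lamhat + σ ^ 2 / 4 ≤ β * q + σ ^ 2 := by
    have hbq : β * q = β * lamhat - β * e := by rw [hq]; ring
    linarith
  -- bounds on each piece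
  have ht0 : 0 ≤ β * lamhat := mul_nonneg hβ hlam
  have hA1 : ‖(β * lamhat * lamhat * ((β * q + σ ^ 2)⁻¹ - (β * lamhat + σ ^ 2)⁻¹)) •
      Matrix.vecMulVec uhat uhat‖ ≤ β * lamhat * δ / (β * q + σ ^ 2) := by
    rw [norm_smul, Real.norm_eq_abs]
    have h1 : ‖Matrix.vecMulVec uhat uhat‖ ≤ 1 := by
      have h := norm_vecMulVec_le uhat uhat
      rwa [hu1, mul_one] at h
    have h2 : (β * q + σ ^ 2)⁻¹ - (β * lamhat + σ ^ 2)⁻¹ =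
        (β * e) / ((β * q + σ ^ 2) * (β * lamhat + σ ^ 2)) := by
      rw [inv_sub_inv hD.ne' hC.ne']
      congr 1
      rw [hq]; ring
    have h3 : |β * lamhat * lamhat * ((β * q + σ ^ 2)⁻¹ - (β * lamhat + σ ^ 2)⁻¹)|
        ≤ β * lamhat * δ / (β * q + σ ^ 2) := by
      rw [h2, abs_mul, abs_of_nonneg (mul_nonneg ht0 hlam), abs_div, abs_mul,
        abs_of_nonneg hβ, abs_of_pos (mul_pos hD hC)]
      have hint : (β * lamhat) * |e| ≤ (β * lamhat + σ ^ 2) * δ :=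
        mul_le_mul (by linarith) heδ (abs_nonneg e) hC.le
      calc β * lamhat * lamhat * (β * |e| / ((β * q + σ ^ 2) * (β * lamhat + σ ^ 2)))
          = (β * lamhat) * ((β * lamhat) * |e|) / ((β * q + σ ^ 2) * (β * lamhat + σ ^ 2)) := by
            ring
        _ ≤ β * lamhat * δ / (β * q + σ ^ 2) := by
            rw [div_le_div_iff₀ (mul_pos hD hC) hD]
            nlinarith [mul_le_mul_of_nonneg_left hint (mul_nonneg ht0 hD.le)]
    calc |β * lamhat * lamhat * ((β * q + σ ^ 2)⁻¹ - (β * lamhat + σ ^ 2)⁻¹)| *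
          ‖Matrix.vecMulVec uhat uhat‖
        ≤ |β * lamhat * lamhat * ((β * q + σ ^ 2)⁻¹ - (β * lamhat + σ ^ 2)⁻¹)| * 1 :=
          mul_le_mul_of_nonneg_left h1 (abs_nonneg _)
      _ = |β * lamhat * lamhat * ((β * q + σ ^ 2)⁻¹ - (β * lamhat + σ ^ 2)⁻¹)| := mul_one _
      _ ≤ β * lamhat * δ / (β * q + σ ^ 2) := h3
  have hA2 : ‖(β * lamhat * (β * q + σ ^ 2)⁻¹) •
      (Matrix.vecMulVec uhat v + Matrix.vecMulVec v uhat)‖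
      ≤ 2 * (β * lamhat * δ) / (β * q + σ ^ 2) := by
    rw [norm_smul, Real.norm_eq_abs,
      abs_of_nonneg (mul_nonneg ht0 (inv_pos.mpr hD).le)]
    have h1 : ‖Matrix.vecMulVec uhat v + Matrix.vecMulVec v uhat‖ ≤ 2 * δ := by
      calc ‖Matrix.vecMulVec uhat v + Matrix.vecMulVec v uhat‖
          ≤ ‖Matrix.vecMulVec uhat v‖ + ‖Matrix.vecMulVec v uhat‖ := norm_add_le _ _
        _ ≤ ‖eu uhat‖ * ‖eu v‖ + ‖eu v‖ * ‖eu uhat‖ :=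
            add_le_add (norm_vecMulVec_le _ _) (norm_vecMulVec_le _ _)
        _ = 2 * ‖eu v‖ := by rw [hu1]; ring
        _ ≤ 2 * δ := by linarith
    calc β * lamhat * (β * q + σ ^ 2)⁻¹ * ‖Matrix.vecMulVec uhat v + Matrix.vecMulVec v uhat‖
        ≤ β * lamhat * (β * q + σ ^ 2)⁻¹ * (2 * δ) := by
          exact mul_le_mul_of_nonneg_left h1 (mul_nonneg ht0 (inv_pos.mpr hD).le)
      _ = 2 * (β * lamhat * δ) / (β * q + σ ^ 2) := by rw [div_eq_mul_inv]; ring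
  have hA3 : ‖(β * (β * q + σ ^ 2)⁻¹) • Matrix.vecMulVec v v‖
      ≤ (3 * σ ^ 2 / 4) * δ / (β * q + σ ^ 2) := by
    rw [norm_smul, Real.norm_eq_abs,
      abs_of_nonneg (mul_nonneg hβ (inv_pos.mpr hD).le)]
    have h1 : ‖Matrix.vecMulVec v v‖ ≤ δ * δ := by
      calc ‖Matrix.vecMulVec v v‖ ≤ ‖eu v‖ * ‖eu v‖ := norm_vecMulVec_le _ _
        _ ≤ δ * δ := by nlinarith
    calc β * (β * q + σ ^ 2)⁻¹ * ‖Matrix.vecMulVec v v‖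
        ≤ β * (β * q + σ ^ 2)⁻¹ * (δ * δ) :=
          mul_le_mul_of_nonneg_left h1 (mul_nonneg hβ (inv_pos.mpr hD).le)
      _ = (β * δ) * δ * (β * q + σ ^ 2)⁻¹ := by ring
      _ ≤ (3 * σ ^ 2 / 4) * δ * (β * q + σ ^ 2)⁻¹ :=
          mul_le_mul_of_nonneg_right (mul_le_mul_of_nonneg_right hsmall hδ0)
            (inv_pos.mpr hD).le
      _ = (3 * σ ^ 2 / 4) * δ / (β * q + σ ^ 2) := (div_eq_mul_inv _ _).symm
  -- combine
  have htri : ‖Shat' - S'‖ ≤ ‖Shat - S‖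
      + ‖(β * lamhat * lamhat * ((β * q + σ ^ 2)⁻¹ - (β * lamhat + σ ^ 2)⁻¹)) •
          Matrix.vecMulVec uhat uhat‖
      + ‖(β * lamhat * (β * q + σ ^ 2)⁻¹) •
          (Matrix.vecMulVec uhat v + Matrix.vecMulVec v uhat)‖
      + ‖(β * (β * q + σ ^ 2)⁻¹) • Matrix.vecMulVec v v‖ := by
    rw [key]
    refine le_trans (norm_add_le _ _) ?_
    refine add_le_add (le_trans (norm_sub_le _ _) ?_) le_rfl
    exact add_le_add (norm_add_le _ _) le_rfl
  have hfinal : β * lamhat * δ / (β * q + σ ^ 2) + 2 * (β * lamhat * δ) / (β * q + σ ^ 2)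
      + (3 * σ ^ 2 / 4) * δ / (β * q + σ ^ 2) ≤ 3 * δ := by
    rw [← add_div, ← add_div, div_le_iff₀ hD]
    nlinarith [mul_le_mul_of_nonneg_left hDlb hδ0]
  calc δ' = ‖Shat' - S'‖ := hδ'n
    _ ≤ _ := htri
    _ ≤ ‖Shat - S‖ + β * lamhat * δ / (β * q + σ ^ 2) + 2 * (β * lamhat * δ) / (β * q + σ ^ 2)
        + (3 * σ ^ 2 / 4) * δ / (β * q + σ ^ 2) := by linarith [hA1, hA2, hA3]
    _ ≤ δ + 3 * δ := by linarith [hfinal]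
    _ = 4 * δ := by ring
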